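/- For the sequence $u_\ell$ defined by $u_0 \in [-1,1]$ and $u_\ell = \frac{u_{\ell-1} + \alpha^2\kappa_1(u_{\ell-1})}{1+\alpha^2}$ with $\alpha > 0$, it holds for every $\ell \ge 0$ that $u_\ell \le u_0 + \frac{\alpha^2}{1+\alpha^2}(\kappa_1(u_0)-u_0)\,\ell$. -/

import Mathlib

open Real

noncomputable def kappa1 (u : ℝ) : ℝ := (u * (π - Real.arccos u) + Real.sqrt (1 - u ^ 2)) / π

lemma kappa1_hasDerivAt {x : ℝ} (hx : x ∈ Set.Ioo (-1:ℝ) 1) :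
    HasDerivAt kappa1 ((π - Real.arccos x) / π) x := by
  have hx1 : x ≠ 1 := ne_of_lt hx.2
  have hx1' : x ≠ -1 := ne_of_gt hx.1
  have h1 : (0:ℝ) < 1 - x ^ 2 := by nlinarith [hx.1, hx.2]
  have hs : 0 < Real.sqrt (1 - x ^ 2) := Real.sqrt_pos.mpr h1
  have harccos : HasDerivAt Real.arccos (-(1 / Real.sqrt (1 - x ^ 2))) x :=
    Real.hasDerivAt_arccos hx1' hx1
  have hpoly : HasDerivAt (fun y : ℝ => 1 - y ^ 2) (-(2 * x)) x := by
    simpa using ((hasDerivAt_pow 2 x).const_sub 1)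
  have hsqrt : HasDerivAt (fun y : ℝ => Real.sqrt (1 - y ^ 2))
      (1 / (2 * Real.sqrt (1 - x ^ 2)) * (-(2 * x))) x :=
    (Real.hasDerivAt_sqrt (ne_of_gt h1)).comp x hpoly
  have hmul : HasDerivAt (fun y : ℝ => y * (π - Real.arccos y))
      (1 * (π - Real.arccos x) + x * (0 - -(1 / Real.sqrt (1 - x ^ 2)))) x :=
    (hasDerivAt_id x).mul ((hasDerivAt_const x π).sub harccos)
  have htot := (hmul.add hsqrt).div_const π
  refine htot.congr_deriv ?_
  field_simp [hs.ne']
  ring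

lemma kappa1_one : kappa1 1 = 1 := by
  simp [kappa1, Real.arccos_one, Real.pi_ne_zero]

lemma kappa1_mono : MonotoneOn kappa1 (Set.Icc (-1:ℝ) 1) := by
  apply monotoneOn_of_deriv_nonneg (convex_Icc _ _)
  · apply Continuous.continuousOn
    unfold kappa1
    exact (((continuous_id.mul (continuous_const.sub Real.continuous_arccos)).add
      ((continuous_const.sub (continuous_pow 2)).sqrt)).div_const π)
  · intro x hx
    rw [interior_Icc] at hx
    exact (kappa1_hasDerivAt hx).differentiableAt.differentiableWithinAt
  · intro x hx
    rw [interior_Icc] at hx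
    rw [(kappa1_hasDerivAt hx).deriv]
    have h1 := Real.arccos_le_pi x
    have h2 := Real.pi_pos
    apply div_nonneg <;> linarith

lemma kappa1_sub_anti : AntitoneOn (fun u => kappa1 u - u) (Set.Icc (-1:ℝ) 1) := by
  apply antitoneOn_of_deriv_nonpos (convex_Icc _ _)
  · apply Continuous.continuousOn
    unfold kappa1
    exact ((((continuous_id.mul (continuous_const.sub Real.continuous_arccos)).add
      ((continuous_const.sub (continuous_pow 2)).sqrt)).div_const π).sub continuous_id)
  · intro x hx
    rw [interior_Icc] at hx
    exact ((kappa1_hasDerivAt hx).sub (hasDerivAt_id' x)).differentiableAt.differentiableWithinAt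
  · intro x hx
    rw [interior_Icc] at hx
    rw [show deriv (fun u => kappa1 u - u) x = _ from ((kappa1_hasDerivAt hx).sub (hasDerivAt_id' x)).deriv]
    have h1 := Real.arccos_nonneg x
    have h2 := Real.pi_pos
    rw [div_sub_one (ne_of_gt h2)]
    apply div_nonpos_of_nonpos_of_nonneg <;> linarith

theorem u_seq_upper_bound (α : ℝ) (hα : 0 < α)
    (u : ℕ → ℝ) (hu0 : u 0 ∈ Set.Icc (-1 : ℝ) 1)
    (hrec : ∀ ℓ : ℕ, u (ℓ + 1) = (u ℓ + α ^ 2 * kappa1 (u ℓ)) / (1 + α ^ 2)) :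
    ∀ ℓ : ℕ, u ℓ ≤ u 0 + α ^ 2 / (1 + α ^ 2) * (kappa1 (u 0) - u 0) * ℓ := by
  obtain ⟨h0l, h0r⟩ := hu0
  have hd : (0:ℝ) < 1 + α ^ 2 := by positivity
  have key : ∀ ℓ : ℕ, u 0 ≤ u ℓ ∧ u ℓ ≤ 1 ∧
      u ℓ ≤ u 0 + α ^ 2 / (1 + α ^ 2) * (kappa1 (u 0) - u 0) * ℓ := by
    intro ℓ
    induction ℓ with
    | zero => exact ⟨le_refl _, h0r, by simp⟩
    | succ n ih =>
      obtain ⟨ih1, ih2, ih3⟩ := ih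
      have hmem : u n ∈ Set.Icc (-1:ℝ) 1 := ⟨le_trans h0l ih1, ih2⟩
      have hmem1 : (1:ℝ) ∈ Set.Icc (-1:ℝ) 1 := by norm_num
      have hk1 : kappa1 (u n) ≤ 1 := by
        have := kappa1_mono hmem hmem1 ih2
        rwa [kappa1_one] at this
      have hk2 : u n ≤ kappa1 (u n) := by
        have := kappa1_sub_anti hmem hmem1 ih2
        simp only [kappa1_one] at this
        linarith
      have hk3 : kappa1 (u n) - u n ≤ kappa1 (u 0) - u 0 :=
        kappa1_sub_anti ⟨h0l, h0r⟩ hmem ih1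
      rw [hrec n]
      refine ⟨?_, ?_, ?_⟩
      · rw [le_div_iff₀ hd]; nlinarith
      · rw [div_le_one hd]; nlinarith
      · rw [div_le_iff₀ hd]
        push_cast
        have hc : 0 ≤ α ^ 2 / (1 + α ^ 2) := by positivity
        have hg0 : 0 ≤ kappa1 (u 0) - u 0 := by
          have := kappa1_sub_anti ⟨h0l, h0r⟩ hmem1 h0r
          simp only [kappa1_one] at this
          linarith
        have expand : α ^ 2 / (1 + α ^ 2) * (1 + α ^ 2) = α ^ 2 := by
          field_simp
        nlinarith [mul_le_mul_of_nonneg_left ih3 (le_of_lt hd)]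
  intro ℓ
  exact (key ℓ).2.2
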